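/- Let 0 < q < 1/2 and let f be a solution of Schilling's problem. Then for every x ∈ (Q-1, 1-Q), every ε ∈ {-1, 1}, and all nonnegative integers m and n, f(q^{m+n}·x + ε·∑_{i=1}^{n} qⁱ) = (1/2)ⁿ · (1/(2q))^{m+n} · f(x). -/

import Mathlib

theorem schilling_lemma2 (q : ℝ) (hq : 0 < q) (hq1 : q < 1 / 2)
    (f : ℝ → ℝ)
    (heq : ∀ x : ℝ, f (q * x) = 1 / (4 * q) * (f (x - 1) + f (x + 1) + 2 * f x))
    (hQ : ∀ x : ℝ, |x| > q / (1 - q) → f x = 0) :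
    ∀ x : ℝ, q / (1 - q) - 1 < x → x < 1 - q / (1 - q) →
      ∀ ε : ℝ, (ε = -1 ∨ ε = 1) → ∀ m n : ℕ,
        f (q ^ (m + n) * x + ε * ∑ i ∈ Finset.Icc 1 n, q ^ i)
          = (1 / 2) ^ n * (1 / (2 * q)) ^ (m + n) * f x := by
  intro x hx1 hx2 ε hε m n
  have h1q : (0:ℝ) < 1 - q := by linarith
  have hQpos : 0 < q / (1 - q) := div_pos hq h1q
  have hQlt1 : q / (1 - q) < 1 := by rw [div_lt_one h1q]; linarith
  have hqk : ∀ k : ℕ, q / (1 - q) - 1 < q ^ k * x ∧ q ^ k * x < 1 - q / (1 - q) := by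
    intro k
    have h0 : (0:ℝ) ≤ q ^ k := by positivity
    have h1 : q ^ k ≤ 1 := pow_le_one₀ hq.le (by linarith)
    rcases le_or_gt 0 x with hx | hx
    · constructor
      · nlinarith
      · nlinarith
    · constructor
      · nlinarith
      · nlinarith
  have hA : ∀ y : ℝ, q / (1 - q) - 1 < y → y < 1 - q / (1 - q) →
      f (q * y) = 1 / (2 * q) * f y := by
    intro y hy1 hy2
    have h1 : f (y - 1) = 0 := hQ _ (by rw [abs_of_neg (by linarith)]; linarith)
    have h2 : f (y + 1) = 0 := hQ _ (by rw [abs_of_pos (by linarith)]; linarith)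
    rw [heq y, h1, h2]; ring
  have hbase : ∀ k : ℕ, f (q ^ k * x) = (1 / (2 * q)) ^ k * f x := by
    intro k
    induction k with
    | zero => simp
    | succ k ih =>
      have h : q ^ (k+1) * x = q * (q ^ k * x) := by ring
      rw [h, hA _ (hqk k).1 (hqk k).2, ih]; ring
  have hS : ∀ k : ℕ, (∑ i ∈ Finset.Icc 1 k, q ^ i) = (q - q ^ (k+1)) / (1 - q) := by
    intro k
    induction k with
    | zero => simp
    | succ k ih =>
      rw [Finset.sum_Icc_succ_top (by omega), ih]
      field_simp
      ring
  have hSnn : ∀ k : ℕ, 0 ≤ ∑ i ∈ Finset.Icc 1 k, q ^ i := by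
    intro k; apply Finset.sum_nonneg; intro i _; positivity
  have hSlt : ∀ k : ℕ, (∑ i ∈ Finset.Icc 1 k, q ^ i) < q / (1 - q) := by
    intro k
    rw [hS k, div_lt_div_iff₀ h1q h1q]
    nlinarith [pow_pos hq (k+1)]
  induction n with
  | zero =>
    have h0 : Finset.Icc 1 0 = (∅ : Finset ℕ) := Finset.Icc_eq_empty (by omega)
    simpa [h0] using hbase m
  | succ n ih =>
    have harg : q ^ (m + (n+1)) * x + ε * ∑ i ∈ Finset.Icc 1 (n+1), q ^ i
        = q * (q ^ (m+n) * x + ε * ((∑ i ∈ Finset.Icc 1 n, q ^ i) + 1)) := by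
      rw [hS (n+1), hS n]
      field_simp
      ring
    set S := ∑ i ∈ Finset.Icc 1 n, q ^ i with hSdef
    have hxk1 := (hqk (m+n)).1
    have hxk2 := (hqk (m+n)).2
    have hSn : 0 ≤ S := hSnn n
    have hSl : S < q / (1 - q) := hSlt n
    rw [harg, heq (q ^ (m+n) * x + ε * (S + 1))]
    have hhalf : (1:ℝ) / (4 * q) = 1 / 2 * (1 / (2 * q)) := by
      field_simp; ring
    rcases hε with h | h
    · subst h
      set z := q ^ (m+n) * x + (-1 : ℝ) * (S + 1) with hz
      have hz1 : f z = 0 := by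
        apply hQ
        rw [abs_of_neg (by nlinarith : z < 0)]
        nlinarith
      have hz2 : f (z - 1) = 0 := by
        apply hQ
        rw [abs_of_neg (by nlinarith : z - 1 < 0)]
        nlinarith
      have hz3 : z + 1 = q ^ (m+n) * x + (-1 : ℝ) * S := by rw [hz]; ring
      rw [hz1, hz2, hz3, ih, hhalf]
      ring
    · subst h
      set z := q ^ (m+n) * x + (1 : ℝ) * (S + 1) with hz
      have hz1 : f z = 0 := by
        apply hQ
        rw [abs_of_pos (by nlinarith : 0 < z)]
        nlinarith
      have hz2 : f (z + 1) = 0 := by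
        apply hQ
        rw [abs_of_pos (by nlinarith : 0 < z + 1)]
        nlinarith
      have hz3 : z - 1 = q ^ (m+n) * x + (1 : ℝ) * S := by rw [hz]; ring
      rw [hz1, hz2, hz3, ih, hhalf]
      ring
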